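/- Let X, H be compact metric spaces and π : X → H a continuous surjection such that the set of points x ∈ X with π⁻¹(π(x)) = {x} is dense in X. Then for every compact subset U of X with cl(int U) = U (i.e., U is regular closed), the image π(U) satisfies cl(int π(U)) = π(U); in particular images of proper regular closed sets under π are proper. -/
import Mathlib


theorem stmt16 {X H : Type*} [MetricSpace X] [CompactSpace X] [MetricSpace H] [CompactSpace H]
    (π : X → H) (hc : Continuous π) (hs : Function.Surjective π)
    (hdense : Dense {x : X | π ⁻¹' {π x} = {x}})
    (U : Set X) (hU : IsCompact U) (hreg : closure (interior U) = U) :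
    closure (interior (π '' U)) = π '' U := by
  have hclosed : IsClosed (π '' U) := (hU.image hc).isClosed
  apply Set.Subset.antisymm (closure_minimal interior_subset hclosed)
  -- key claim: injective points in interior U map into interior (π '' U)
  set S : Set X := {x : X | π ⁻¹' {π x} = {x}} ∩ interior U with hS
  have claimA : ∀ y ∈ S, π y ∈ interior (π '' U) := by
    rintro y ⟨hyinj, hyU⟩
    have hmap : IsClosedMap π := hc.isClosedMap
    set W : Set H := (π '' (interior U)ᶜ)ᶜ with hW
    have hWopen : IsOpen W := (hmap _ isOpen_interior.isClosed_compl).isOpen_compl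
    have hyW : π y ∈ W := by
      intro hmem
      obtain ⟨z, hz, hzy⟩ := hmem
      have : z ∈ π ⁻¹' {π y} := hzy
      rw [hyinj] at this
      exact hz (this ▸ hyU)
    have hWU : W ⊆ π '' U := by
      intro h hh
      obtain ⟨z, hz⟩ := hs h
      have hzU : z ∈ interior U := by
        by_contra hzn
        exact hh ⟨z, hzn, hz⟩
      exact ⟨z, interior_subset hzU, hz⟩
    exact mem_interior.mpr ⟨W, hWU, hWopen, hyW⟩
  rintro _ ⟨u, huU, rfl⟩
  have h1 : interior U ⊆ closure S := by
    have := hdense.open_subset_closure_inter (isOpen_interior (s := U))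
    simpa [hS, Set.inter_comm] using this
  have h2 : u ∈ closure S := by
    have : u ∈ closure (interior U) := by rw [hreg]; exact huU
    exact closure_minimal h1 isClosed_closure this
  have h3 : π u ∈ closure (π '' S) :=
    (image_closure_subset_closure_image hc) ⟨u, h2, rfl⟩
  refine closure_mono ?_ h3
  rintro _ ⟨y, hy, rfl⟩
  exact claimA y hy
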